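/- Let f = h − g be a tropical meromorphic function with f(0) = 0, where g and h are tropical entire functions without common roots. Then the tropical Cartan characteristic of the curve [g : h] equals the tropical Nevanlinna characteristic of f: (F(r)+F(−r))/2 − F(0) = T(r, f) for all r ≥ 0, where F(x) = max{g(x), h(x)}. -/

import Mathlib

open Set Filter MeasureTheory Topology

/-- A tropical meromorphic function: a continuous piecewise linear real function, i.e.
a continuous function that is affine on a one-sided neighbourhood of every point. -/
def TropMero (f : ℝ → ℝ) : Prop :=
  Continuous f ∧ ∀ x : ℝ, ∃ ε > (0 : ℝ),
    (∃ a b : ℝ, ∀ y ∈ Set.Ico x (x + ε), f y = a * y + b) ∧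
    (∃ a b : ℝ, ∀ y ∈ Set.Ioc (x - ε) x, f y = a * y + b)

/-- `ω_f(x)`: the jump of the derivative of `f` at `x` (right slope minus left slope).
`x` is a root of `f` if `ω_f(x) > 0` and a pole if `ω_f(x) < 0`. -/
noncomputable def omega (f : ℝ → ℝ) (x : ℝ) : ℝ :=
  derivWithin f (Set.Ici x) x - derivWithin f (Set.Iic x) x

/-- A tropical entire function: a tropical meromorphic function without poles,
equivalently a convex one. -/
def TropEntire (f : ℝ → ℝ) : Prop := TropMero f ∧ ConvexOn ℝ Set.univ f

/-- The tropical proximity function `m(r, f) = (f⁺(r) + f⁺(-r))/2`. -/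
noncomputable def mProx (f : ℝ → ℝ) (r : ℝ) : ℝ := (max (f r) 0 + max (f (-r)) 0) / 2

/-- The unintegrated counting function `n(t, f) = Σ_{|s| ≤ t, ω_f(s) < 0} |ω_f(s)|`. -/
noncomputable def nCount (f : ℝ → ℝ) (t : ℝ) : ℝ :=
  ∑ᶠ s ∈ {s : ℝ | |s| ≤ t ∧ omega f s < 0}, |omega f s|

/-- The tropical counting function `N(r, f) = (1/2) ∫₀^r n(t, f) dt`. -/
noncomputable def NCount (f : ℝ → ℝ) (r : ℝ) : ℝ := (1 / 2) * ∫ t in (0 : ℝ)..r, nCount f t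

/-- The tropical Nevanlinna characteristic `T(r, f) = m(r, f) + N(r, f)`. -/
noncomputable def Tchar (f : ℝ → ℝ) (r : ℝ) : ℝ := mProx f r + NCount f r

noncomputable def rder (f : ℝ → ℝ) (x : ℝ) : ℝ := derivWithin f (Set.Ici x) x
noncomputable def lder (f : ℝ → ℝ) (x : ℝ) : ℝ := derivWithin f (Set.Iic x) x

lemma omega_eq (f : ℝ → ℝ) (x : ℝ) : omega f x = rder f x - lder f x := rfl

lemma affine_hasDerivAt (a b x : ℝ) : HasDerivAt (fun y => a * y + b) a x := by
  simpa using ((hasDerivAt_id x).const_mul a).add_const b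

lemma hasDerivWithinAt_Ici_of_affine {f : ℝ → ℝ} {x ε a b : ℝ} (hε : 0 < ε)
    (hf : ∀ y ∈ Set.Ico x (x + ε), f y = a * y + b) :
    HasDerivWithinAt f a (Set.Ici x) x := by
  have h1 : HasDerivWithinAt (fun y => a * y + b) a (Set.Ici x) x :=
    (affine_hasDerivAt a b x).hasDerivWithinAt
  have hmem : Set.Ico x (x + ε) ∈ 𝓝[Set.Ici x] x :=
    Ico_mem_nhdsGE (by linarith)
  refine h1.congr_of_eventuallyEq ?_ (hf x ⟨le_refl x, by linarith⟩)
  filter_upwards [hmem] with y hy using hf y hy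

lemma hasDerivWithinAt_Iic_of_affine {f : ℝ → ℝ} {x ε a b : ℝ} (hε : 0 < ε)
    (hf : ∀ y ∈ Set.Ioc (x - ε) x, f y = a * y + b) :
    HasDerivWithinAt f a (Set.Iic x) x := by
  have h1 : HasDerivWithinAt (fun y => a * y + b) a (Set.Iic x) x :=
    (affine_hasDerivAt a b x).hasDerivWithinAt
  have hmem : Set.Ioc (x - ε) x ∈ 𝓝[Set.Iic x] x :=
    Ioc_mem_nhdsLE (by linarith)
  refine h1.congr_of_eventuallyEq ?_ (hf x ⟨by linarith, le_refl x⟩)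
  filter_upwards [hmem] with y hy using hf y hy

lemma rder_of_affine {f : ℝ → ℝ} {x ε a b : ℝ} (hε : 0 < ε)
    (hf : ∀ y ∈ Set.Ico x (x + ε), f y = a * y + b) : rder f x = a :=
  (hasDerivWithinAt_Ici_of_affine hε hf).derivWithin ((uniqueDiffOn_Ici x) x Set.self_mem_Ici)

lemma lder_of_affine {f : ℝ → ℝ} {x ε a b : ℝ} (hε : 0 < ε)
    (hf : ∀ y ∈ Set.Ioc (x - ε) x, f y = a * y + b) : lder f x = a :=
  (hasDerivWithinAt_Iic_of_affine hε hf).derivWithin ((uniqueDiffOn_Iic x) x Set.self_mem_Iic)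

lemma TropMero.localData {f : ℝ → ℝ} (hf : TropMero f) (x : ℝ) :
    ∃ ε > (0:ℝ), ∃ a₁ b₁ a₂ b₂ : ℝ,
      (∀ y ∈ Set.Ico x (x + ε), f y = a₁ * y + b₁) ∧
      (∀ y ∈ Set.Ioc (x - ε) x, f y = a₂ * y + b₂) ∧
      rder f x = a₁ ∧ lder f x = a₂ ∧
      (∀ y ∈ Set.Ioo x (x + ε), rder f y = a₁ ∧ lder f y = a₁) ∧
      (∀ y ∈ Set.Ioo (x - ε) x, rder f y = a₂ ∧ lder f y = a₂) := by
  obtain ⟨ε, hε, ⟨a₁, b₁, h₁⟩, ⟨a₂, b₂, h₂⟩⟩ := hf.2 x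
  refine ⟨ε, hε, a₁, b₁, a₂, b₂, h₁, h₂, rder_of_affine hε h₁, lder_of_affine hε h₂, ?_, ?_⟩
  · intro y hy
    have hr : ∀ z ∈ Set.Ico y (y + (x + ε - y)), f z = a₁ * z + b₁ := fun z hz =>
      h₁ z ⟨le_trans hy.1.le hz.1, by linarith [hz.2]⟩
    have hl : ∀ z ∈ Set.Ioc (y - (y - x)) y, f z = a₁ * z + b₁ := fun z hz =>
      h₁ z ⟨by linarith [hz.1], lt_of_le_of_lt hz.2 hy.2⟩
    exact ⟨rder_of_affine (by linarith [hy.2]) hr, lder_of_affine (by linarith [hy.1]) hl⟩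
  · intro y hy
    have hr : ∀ z ∈ Set.Ico y (y + (x - y)), f z = a₂ * z + b₂ := fun z hz =>
      h₂ z ⟨lt_of_lt_of_le hy.1 hz.1, by linarith [hz.2]⟩
    have hl : ∀ z ∈ Set.Ioc (y - (y - (x - ε))) y, f z = a₂ * z + b₂ := fun z hz =>
      h₂ z ⟨by linarith [hz.1], le_trans hz.2 hy.2.le⟩
    exact ⟨rder_of_affine (by linarith [hy.2]) hr, lder_of_affine (by linarith [hy.1]) hl⟩

lemma TropMero.omega_punctured {f : ℝ → ℝ} (hf : TropMero f) (x : ℝ) :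
    ∃ ε > (0:ℝ), ∀ y ∈ Set.Ioo (x - ε) (x + ε), y ≠ x → omega f y = 0 := by
  obtain ⟨ε, hε, a₁, b₁, a₂, b₂, -, -, -, -, hR, hL⟩ := hf.localData x
  refine ⟨ε, hε, fun y hy hne => ?_⟩
  rcases lt_or_gt_of_ne hne with hlt | hgt
  · obtain ⟨h1, h2⟩ := hL y ⟨hy.1, hlt⟩
    simp [omega_eq, h1, h2]
  · obtain ⟨h1, h2⟩ := hR y ⟨hgt, hy.2⟩
    simp [omega_eq, h1, h2]

lemma TropMero.finite_kinks {f : ℝ → ℝ} (hf : TropMero f) {K : Set ℝ} (hK : IsCompact K) :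
    {s : ℝ | s ∈ K ∧ omega f s ≠ 0}.Finite := by
  choose ε hε hω using hf.omega_punctured
  obtain ⟨t, -, ht⟩ := hK.elim_nhds_subcover (fun x => Set.Ioo (x - ε x) (x + ε x))
    (fun x _ => Ioo_mem_nhds (by linarith [hε x]) (by linarith [hε x]))
  refine Set.Finite.subset t.finite_toSet (fun s hs => ?_)
  obtain ⟨x, hxt, hx⟩ := Set.mem_iUnion₂.1 (ht hs.1)
  by_cases hsx : s = x
  · exact hsx ▸ hxt
  · exact absurd (hω x s hx hsx) hs.2

lemma slope_eq_rder {g : ℝ → ℝ} (hg : TropMero g) (x : ℝ) :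
    ∃ δ > (0:ℝ), ∀ δ' , 0 < δ' → δ' ≤ δ → rder g x = (g (x + δ') - g x) / δ' := by
  obtain ⟨ε, hε, a₁, b₁, _, _, hA, -, hr, -, -, -⟩ := hg.localData x
  refine ⟨ε/2, by linarith, fun δ' h1 h2 => ?_⟩
  have hx : g x = a₁ * x + b₁ := hA _ ⟨le_refl _, by linarith⟩
  have hx' : g (x + δ') = a₁ * (x + δ') + b₁ := hA _ ⟨by linarith, by linarith⟩
  rw [hr, hx, hx']; field_simp; ring

lemma slope_eq_lder {g : ℝ → ℝ} (hg : TropMero g) (x : ℝ) :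
    ∃ δ > (0:ℝ), ∀ δ' , 0 < δ' → δ' ≤ δ → lder g x = (g x - g (x - δ')) / δ' := by
  obtain ⟨ε, hε, _, _, a₂, b₂, -, hA, -, hl, -, -⟩ := hg.localData x
  refine ⟨ε/2, by linarith, fun δ' h1 h2 => ?_⟩
  have hx : g x = a₂ * x + b₂ := hA _ ⟨by linarith, le_refl _⟩
  have hx' : g (x - δ') = a₂ * (x - δ') + b₂ := hA _ ⟨by linarith, by linarith⟩
  rw [hl, hx, hx']; field_simp; ring

lemma rder_mono {g : ℝ → ℝ} (hg : TropMero g) (hc : ConvexOn ℝ Set.univ g) :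
    Monotone (rder g) := by
  intro x y hxy
  rcases eq_or_lt_of_le hxy with rfl | hlt
  · exact le_refl _
  obtain ⟨δ₁, hδ₁, hs₁⟩ := slope_eq_rder hg x
  obtain ⟨δ₂, hδ₂, hs₂⟩ := slope_eq_rder hg y
  set d := min δ₁ ((y - x)/2) with hd
  have hd0 : 0 < d := lt_min hδ₁ (by linarith)
  have hdy : x + d < y := by
    have : d ≤ (y - x)/2 := min_le_right _ _
    linarith
  have e1 : rder g x = (g (x + d) - g x) / (x + d - x) := by
    rw [hs₁ d hd0 (min_le_left _ _)]; ring_nf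
  have e2 : rder g y = (g (y + δ₂) - g y) / (y + δ₂ - y) := by
    rw [hs₂ δ₂ hδ₂ (le_refl _)]; ring_nf
  have ineq1 : (g (x + d) - g x) / (x + d - x) ≤ (g y - g (x + d)) / (y - (x + d)) :=
    hc.slope_mono_adjacent (Set.mem_univ x) (Set.mem_univ y) (by linarith) hdy
  have ineq2 : (g y - g (x + d)) / (y - (x + d)) ≤ (g (y + δ₂) - g y) / (y + δ₂ - y) :=
    hc.slope_mono_adjacent (Set.mem_univ (x + d)) (Set.mem_univ (y + δ₂)) hdy (by linarith)
  rw [e1, e2]; linarith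

lemma omega_nonneg {g : ℝ → ℝ} (hg : TropMero g) (hc : ConvexOn ℝ Set.univ g) (x : ℝ) :
    0 ≤ omega g x := by
  obtain ⟨δ₁, hδ₁, hs₁⟩ := slope_eq_rder hg x
  obtain ⟨δ₂, hδ₂, hs₂⟩ := slope_eq_lder hg x
  set d := min δ₁ δ₂ with hd
  have hd0 : 0 < d := lt_min hδ₁ hδ₂
  have e1 : rder g x = (g (x + d) - g x) / (x + d - x) := by
    rw [hs₁ d hd0 (min_le_left _ _)]; ring_nf
  have e2 : lder g x = (g x - g (x - d)) / (x - (x - d)) := by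
    rw [hs₂ d hd0 (min_le_right _ _)]; ring_nf
  have ineq : (g x - g (x - d)) / (x - (x - d)) ≤ (g (x + d) - g x) / (x + d - x) :=
    hc.slope_mono_adjacent (Set.mem_univ (x - d)) (Set.mem_univ (x + d))
      (by linarith) (by linarith)
  rw [omega_eq, e1, e2]; linarith

lemma eq_of_locally_const {H : ℝ → ℝ} (h : ∀ x : ℝ, ∀ᶠ t in 𝓝 x, H t = H x) (a b : ℝ) :
    H a = H b := by
  have hclopen : IsClopen {t : ℝ | H t = H a} := by
    constructor
    · rw [← isOpen_compl_iff, isOpen_iff_mem_nhds]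
      intro t ht
      filter_upwards [h t] with u hu
      simp only [Set.mem_compl_iff, Set.mem_setOf_eq] at ht ⊢
      rw [hu]; exact ht
    · rw [isOpen_iff_mem_nhds]
      intro t ht
      filter_upwards [h t] with u hu
      simp only [Set.mem_setOf_eq] at ht ⊢
      rw [hu]; exact ht
  rcases isClopen_iff.1 hclopen with hempty | huniv
  · exfalso
    have : a ∈ ({t : ℝ | H t = H a} : Set ℝ) := rfl
    rw [hempty] at this; exact this
  · have : b ∈ ({t : ℝ | H t = H a} : Set ℝ) := huniv ▸ Set.mem_univ b
    exact this.symm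

lemma finsum_omega_Icc {f : ℝ → ℝ} (hf : TropMero f) {a b : ℝ} (hab : a ≤ b) :
    ∑ᶠ s ∈ Set.Icc a b, omega f s = rder f b - lder f a := by
  have fin : ∀ S : Set ℝ, S ⊆ Set.Icc a b → (S ∩ Function.support (omega f)).Finite := by
    intro S hS
    exact (hf.finite_kinks isCompact_Icc).subset (fun s hs => ⟨hS hs.1, hs.2⟩)
  set c : ℝ → ℝ := fun t => max a (min b t) with hc
  have hca : ∀ t : ℝ, a ≤ c t := fun t => le_max_left _ _
  have hcb : ∀ t : ℝ, c t ≤ b := fun t => max_le hab (min_le_left _ _)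
  have hcid : ∀ x : ℝ, a ≤ x → x ≤ b → c x = x := by
    intro x h1 h2; simp only [hc]; rw [min_eq_right h2, max_eq_right h1]
  set H : ℝ → ℝ := fun t => rder f (c t) - ∑ᶠ s ∈ Set.Icc a (c t), omega f s with hH
  have key : ∀ x : ℝ, ∀ᶠ t in 𝓝 x, H t = H x := by
    intro x
    rcases lt_trichotomy x a with hxa | hxa'
    · filter_upwards [Iio_mem_nhds hxa] with t ht
      have h1 : c t = a := by
        simp only [hc]; rw [max_eq_left]; exact le_trans (min_le_right _ _) (le_of_lt ht)
      have h2 : c x = a := by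
        simp only [hc]; rw [max_eq_left]; exact le_trans (min_le_right _ _) (le_of_lt hxa)
      simp only [hH, h1, h2]
    rcases lt_trichotomy b x with hbx | hbx'
    · filter_upwards [Ioi_mem_nhds hbx] with t ht
      have h1 : c t = b := by
        simp only [hc]; rw [min_eq_left (le_of_lt ht), max_eq_right hab]
      have h2 : c x = b := by
        simp only [hc]; rw [min_eq_left (le_of_lt hbx), max_eq_right hab]
      simp only [hH, h1, h2]
    -- now a ≤ x ≤ b
    have hax : a ≤ x := hxa'.elim (fun h => h.ge) le_of_lt
    have hxb : x ≤ b := hbx'.elim (fun h => h.ge) le_of_lt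
    have hcx : c x = x := hcid x hax hxb
    obtain ⟨ε, hε, a₁, b₁, a₂, b₂, -, -, hr, hl, hR, hL⟩ := hf.localData x
    have hnbhd : Set.Ioo (x - ε) (x + ε) ∈ 𝓝 x :=
      Ioo_mem_nhds (by linarith) (by linarith)
    filter_upwards [hnbhd] with t ht
    set u := c t with hu
    have hu1 : a ≤ u := hca t
    have hu2 : u ≤ b := hcb t
    have hbetween : (x ≤ t ∧ x ≤ u ∧ u ≤ t) ∨ (t ≤ x ∧ t ≤ u ∧ u ≤ x) := by
      rcases le_total x t with hxt | htx
      · left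
        refine ⟨hxt, ?_, ?_⟩
        · calc x = c x := hcx.symm
            _ ≤ c t := by
              simp only [hc]
              exact max_le_max (le_refl a) (min_le_min (le_refl b) hxt)
        · simp only [hu, hc]
          exact max_le (hax.trans hxt) (min_le_right _ _)
      · right
        refine ⟨htx, ?_, ?_⟩
        · simp only [hu, hc]
          have : min b t = t := min_eq_right (htx.trans hxb)
          rw [this]; exact le_max_right _ _
        · calc u = c t := rfl
            _ ≤ c x := by
              simp only [hc]
              exact max_le_max (le_refl a) (min_le_min (le_refl b) htx)
            _ = x := hcx
    rcases lt_trichotomy u x with hux | hux'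
    · -- u < x ; t < x so u ≥ t > x - ε
      have htle : t ≤ x := by
        rcases hbetween with ⟨h1, h2, h3⟩ | ⟨h1, h2, h3⟩
        · linarith
        · exact h1
      have htu : t ≤ u := by
        rcases hbetween with ⟨h1, h2, h3⟩ | ⟨h1, h2, h3⟩
        · linarith
        · exact h2
      have hue : x - ε < u := lt_of_lt_of_le ht.1 htu
      have hru : rder f u = a₂ := (hL u ⟨hue, hux⟩).1
      have hsplit : Set.Icc a x = Set.Icc a u ∪ Set.Ioc u x :=
        (Set.Icc_union_Ioc_eq_Icc hu1 hux.le).symm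
      have hsplit2 : Set.Ioc u x = Set.Ioo u x ∪ {x} := by
        rw [Set.Ioo_union_right hux]
      have hzero : ∑ᶠ s ∈ Set.Ioo u x, omega f s = 0 := by
        apply finsum_mem_of_eqOn_zero
        intro s hs
        have := hL s ⟨lt_trans hue hs.1, hs.2⟩
        simp only [omega_eq, this.1, this.2, sub_self, Pi.zero_apply]
      have e1 : ∑ᶠ s ∈ Set.Icc a x, omega f s
          = ∑ᶠ s ∈ Set.Icc a u, omega f s + ∑ᶠ s ∈ Set.Ioc u x, omega f s := by
        rw [hsplit]
        apply finsum_mem_union'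
        · exact Set.disjoint_left.2 fun s hs hs' => absurd hs.2 (not_le.2 hs'.1)
        · exact fin _ (Set.Icc_subset_Icc (le_refl a) (hu2.trans (le_refl b)) |>.trans
            (Set.Icc_subset_Icc (le_refl a) (le_refl b)))
        · exact fin _ (fun s hs => ⟨hu1.trans hs.1.le, hs.2.trans hxb⟩)
      have e2 : ∑ᶠ s ∈ Set.Ioc u x, omega f s = omega f x := by
        rw [hsplit2, finsum_mem_union']
        · rw [hzero, finsum_mem_singleton, zero_add]
        · exact Set.disjoint_left.2 fun s hs hs' => absurd hs.2 (by
            simp only [Set.mem_singleton_iff] at hs'; exact hs' ▸ lt_irrefl x)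
        · exact fin _ (fun s hs => ⟨hu1.trans hs.1.le, hs.2.le.trans hxb⟩)
        · exact (Set.finite_singleton x).inter_of_left _
      simp only [hH, hcx]
      rw [hru, e1, e2, hr]
      have hlx : lder f x = a₂ := hl
      simp only [omega_eq, hr, hlx]
      ring
    rcases hux' with rfl | hxu
    · simp only [hH, hcx]; rfl
    · -- x < u so t ≥ x, u ≤ t < x + ε
      have hut : u ≤ t := by
        rcases hbetween with ⟨h1, h2, h3⟩ | ⟨h1, h2, h3⟩
        · exact h3
        · linarith
      have hue : u < x + ε := lt_of_le_of_lt hut ht.2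
      have hru : rder f u = a₁ := (hR u ⟨hxu, hue⟩).1
      have hsplit : Set.Icc a u = Set.Icc a x ∪ Set.Ioc x u :=
        (Set.Icc_union_Ioc_eq_Icc hax hxu.le).symm
      have hzero : ∑ᶠ s ∈ Set.Ioc x u, omega f s = 0 := by
        apply finsum_mem_of_eqOn_zero
        intro s hs
        have := hR s ⟨hs.1, lt_of_le_of_lt hs.2 hue⟩
        simp only [omega_eq, this.1, this.2, sub_self, Pi.zero_apply]
      have e1 : ∑ᶠ s ∈ Set.Icc a u, omega f s
          = ∑ᶠ s ∈ Set.Icc a x, omega f s + ∑ᶠ s ∈ Set.Ioc x u, omega f s := by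
        rw [hsplit]
        apply finsum_mem_union'
        · exact Set.disjoint_left.2 fun s hs hs' => absurd hs.2 (not_le.2 hs'.1)
        · exact fin _ (Set.Icc_subset_Icc (le_refl a) hxb)
        · exact fin _ (fun s hs => ⟨hax.trans hs.1.le, hs.2.trans hu2⟩)
      simp only [hH, hcx]
      rw [hru, e1, hzero, hr, add_zero]
  have hHab := eq_of_locally_const key a b
  have hA : H a = lder f a := by
    simp only [hH, hcid a (le_refl a) hab, Set.Icc_self, finsum_mem_singleton, omega_eq]
    ring
  have hB : H b = rder f b - ∑ᶠ s ∈ Set.Icc a b, omega f s := by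
    simp only [hH, hcid b hab (le_refl b)]
  rw [hB] at hHab; rw [hA] at hHab; linarith

lemma hasDerivWithinAt_rder {f : ℝ → ℝ} (hf : TropMero f) (x : ℝ) :
    HasDerivWithinAt f (rder f x) (Set.Ici x) x := by
  obtain ⟨ε, hε, a₁, b₁, a₂, b₂, h₁, -, hr, -, -, -⟩ := hf.localData x
  rw [hr]; exact hasDerivWithinAt_Ici_of_affine hε h₁

lemma hasDerivWithinAt_lder {f : ℝ → ℝ} (hf : TropMero f) (x : ℝ) :
    HasDerivWithinAt f (lder f x) (Set.Iic x) x := by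
  obtain ⟨ε, hε, a₁, b₁, a₂, b₂, -, h₂, -, hl, -, -⟩ := hf.localData x
  rw [hl]; exact hasDerivWithinAt_Iic_of_affine hε h₂

lemma integral_rder {g : ℝ → ℝ} (hg : TropMero g) (hc : ConvexOn ℝ Set.univ g) {a b : ℝ}
    (hab : a ≤ b) : ∫ t in a..b, rder g t = g b - g a :=
  intervalIntegral.integral_eq_sub_of_hasDeriv_right_of_le hab
    (hg.1.continuousOn)
    (fun x _ => (hasDerivWithinAt_rder hg x).mono Set.Ioi_subset_Ici_self)
    ((rder_mono hg hc).intervalIntegrable)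

lemma omega_sub {g h : ℝ → ℝ} (hg : TropMero g) (hh : TropMero h) (x : ℝ) :
    omega (fun y => h y - g y) x = omega h x - omega g x := by
  have hr : rder (fun y => h y - g y) x = rder h x - rder g x :=
    ((hasDerivWithinAt_rder hh x).sub (hasDerivWithinAt_rder hg x)).derivWithin
      ((uniqueDiffOn_Ici x) x Set.self_mem_Ici)
  have hl : lder (fun y => h y - g y) x = lder h x - lder g x :=
    ((hasDerivWithinAt_lder hh x).sub (hasDerivWithinAt_lder hg x)).derivWithin
      ((uniqueDiffOn_Iic x) x Set.self_mem_Iic)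
  show rder (fun y => h y - g y) x - lder (fun y => h y - g y) x = _
  rw [hr, hl, omega_eq, omega_eq]; ring

lemma nCount_eq {g h : ℝ → ℝ} (hg : TropMero g) (hcg : ConvexOn ℝ Set.univ g)
    (hh : TropMero h) (hch : ConvexOn ℝ Set.univ h)
    (hcommon : ¬ ∃ x : ℝ, 0 < omega g x ∧ 0 < omega h x) {t : ℝ} (ht : 0 ≤ t) :
    nCount (fun x => h x - g x) t = rder g t - lder g (-t) := by
  have homega : ∀ s : ℝ, omega (fun x => h x - g x) s < 0 ↔ 0 < omega g s := by
    intro s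
    rw [omega_sub hg hh]
    constructor
    · intro hlt; have := omega_nonneg hh hch s; linarith
    · intro hpos
      have hz : omega h s = 0 := by
        rcases lt_or_eq_of_le (omega_nonneg hh hch s) with hpos' | heq
        · exact absurd ⟨s, hpos, hpos'⟩ hcommon
        · exact heq.symm
      rw [hz]; linarith
  have hset : {s : ℝ | |s| ≤ t ∧ omega (fun x => h x - g x) s < 0}
      = Set.Icc (-t) t ∩ Function.support (omega g) := by
    ext s
    simp only [Set.mem_setOf_eq, Set.mem_inter_iff, Set.mem_Icc, Function.mem_support, abs_le,
      homega s]
    constructor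
    · rintro ⟨h1, h2⟩; exact ⟨h1, ne_of_gt h2⟩
    · rintro ⟨h1, h2⟩; exact ⟨h1, lt_of_le_of_ne (omega_nonneg hg hcg s) (Ne.symm h2)⟩
  have habs : ∀ s ∈ Set.Icc (-t) t ∩ Function.support (omega g),
      |omega (fun x => h x - g x) s| = omega g s := by
    intro s hs
    have h2 : 0 < omega g s := lt_of_le_of_ne (omega_nonneg hg hcg s) (Ne.symm hs.2)
    have hz : omega h s = 0 := by
      rcases lt_or_eq_of_le (omega_nonneg hh hch s) with hpos' | heq
      · exact absurd ⟨s, h2, hpos'⟩ hcommon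
      · exact heq.symm
    rw [omega_sub hg hh, hz, abs_of_neg (by linarith)]; ring
  rw [nCount, finsum_mem_congr hset habs, finsum_mem_inter_support,
    finsum_omega_Icc hg (by linarith)]

lemma integral_jensen {g : ℝ → ℝ} (hg : TropMero g) (hcg : ConvexOn ℝ Set.univ g) {r : ℝ}
    (hr : 0 ≤ r) :
    ∫ t in (0:ℝ)..r, (rder g t - lder g (-t)) = (g r - g 0) + (g (-r) - g 0) := by
  have I1 : IntervalIntegrable (rder g) volume 0 r := (rder_mono hg hcg).intervalIntegrable
  have hanti : Antitone (fun t : ℝ => rder g (-t)) :=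
    fun x y hxy => rder_mono hg hcg (neg_le_neg hxy)
  have I2 : IntervalIntegrable (fun t : ℝ => rder g (-t)) volume 0 r :=
    hanti.intervalIntegrable
  -- the bad set where lder (-t) ≠ rder (-t)
  set D : Set ℝ := {t : ℝ | t ∈ Set.Icc (-r) r ∧ omega g (-t) ≠ 0} with hD
  have hDfin : D.Finite := by
    have hk : {s : ℝ | s ∈ Set.Icc (-r) r ∧ omega g s ≠ 0}.Finite :=
      hg.finite_kinks isCompact_Icc
    apply (hk.image Neg.neg).subset
    rintro t ⟨ht1, ht2⟩
    exact ⟨-t, ⟨⟨by linarith [ht1.2], by linarith [ht1.1]⟩, ht2⟩, neg_neg t⟩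
  have hDvol : volume D = 0 := hDfin.measure_zero _
  have haeD : ∀ᵐ x : ℝ, x ∉ D := by
    rw [ae_iff]
    simpa using hDvol
  have haeeq : ∀ᵐ x : ℝ, x ∈ Set.uIoc (0:ℝ) r → lder g (-x) = rder g (-x) := by
    filter_upwards [haeD] with x hx hxmem
    rw [Set.uIoc_of_le hr] at hxmem
    have hmem : x ∈ Set.Icc (-r) r := ⟨by linarith [hxmem.1], hxmem.2⟩
    have : omega g (-x) = 0 := by
      by_contra hne
      exact hx ⟨hmem, hne⟩
    have := this
    rw [omega_eq] at this
    linarith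
  have I2' : IntervalIntegrable (fun t : ℝ => lder g (-t)) volume 0 r := by
    rw [intervalIntegrable_iff] at I2 ⊢
    apply I2.congr_fun_ae
    rw [Filter.EventuallyEq, ae_restrict_iff' measurableSet_uIoc]
    filter_upwards [haeeq] with x hx hxmem
    exact (hx hxmem).symm
  have heq : ∫ t in (0:ℝ)..r, lder g (-t) = ∫ t in (0:ℝ)..r, rder g (-t) := by
    apply intervalIntegral.integral_congr_ae
    filter_upwards [haeeq] with x hx hxmem using hx hxmem
  rw [intervalIntegral.integral_sub I1 I2', integral_rder hg hcg hr, heq]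
  have hcomp : ∫ t in (0:ℝ)..r, rder g (-t) = ∫ t in (-r)..(0:ℝ), rder g t := by
    simpa using intervalIntegral.integral_comp_neg (a := (0:ℝ)) (b := r) (f := rder g)
  rw [hcomp, integral_rder hg hcg (by linarith : -r ≤ 0)]
  ring

/-- If `f = h − g` is a tropical meromorphic function with `f(0) = 0`, where `g` and `h`
are tropical entire functions without common roots, then the tropical Cartan
characteristic of the curve `[g : h]` equals the tropical Nevanlinna characteristic of
`f`: with `F(x) = max {g(x), h(x)}`, `(F(r)+F(−r))/2 − F(0) = T(r, f)` for all `r ≥ 0`. -/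
theorem cartan_eq_nevanlinna_characteristic (g h : ℝ → ℝ)
    (hg : TropEntire g) (hh : TropEntire h)
    (hcommon : ¬ ∃ x : ℝ, 0 < omega g x ∧ 0 < omega h x)
    (hnorm : h 0 - g 0 = 0) :
    ∀ r : ℝ, 0 ≤ r →
      (max (g r) (h r) + max (g (-r)) (h (-r))) / 2 - max (g 0) (h 0) =
        Tchar (fun x => h x - g x) r := by
  intro r hr
  obtain ⟨hgm, hgc⟩ := hg
  obtain ⟨hhm, hhc⟩ := hh
  have h0 : h 0 = g 0 := by linarith
  have hmax0 : max (g 0) (h 0) = g 0 := by rw [h0, max_self]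
  have hplus : ∀ x : ℝ, max (h x - g x) 0 = max (g x) (h x) - g x := by
    intro x
    rw [max_comm (g x) (h x), ← max_sub_sub_right, sub_self]
  have hint : ∫ t in (0:ℝ)..r, nCount (fun x => h x - g x) t
      = (g r - g 0) + (g (-r) - g 0) := by
    rw [← integral_jensen hgm hgc hr]
    apply intervalIntegral.integral_congr
    intro t htmem
    rw [Set.uIcc_of_le hr] at htmem
    exact nCount_eq hgm hgc hhm hhc hcommon htmem.1
  rw [Tchar, mProx, NCount, hint, hmax0]
  simp only [hplus r, hplus (-r)]
  ring
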